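/- Let V_1 → ⋯ → V_n be a chain of linear maps f_i : V_i → V_{i+1} over a field K such that rank(f_{j-1}∘⋯∘f_i) = min{dim V_i, ..., dim V_j} for all i ≤ j, and let W_1 → ⋯ → W_n be another such chain with the same dimensions dim W_i = dim V_i and the same property. Then the two chains are isomorphic as representations: there exist linear isomorphisms g_i : V_i → W_i with g_{i+1} ∘ f_i = f'_i ∘ g_i for all i. -/

import Mathlib

open Submodule Module LinearMap

section Helpers

variable {K : Type*} [Field K] {V : Type*} [AddCommGroup V] [Module K V]
  {W : Type*} [AddCommGroup W] [Module K W]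

/-- Glue two isomorphisms along complementary decompositions. -/
lemma glue_exists (p c : Submodule K V) (p' c' : Submodule K W)
    (h : IsCompl p c) (h' : IsCompl p' c')
    (φ : p ≃ₗ[K] p') (ξ : c ≃ₗ[K] c') :
    ∃ e : V ≃ₗ[K] W, (∀ x : p, e x = φ x) ∧ (∀ x : c, e x = ξ x) := by
  refine ⟨((Submodule.prodEquivOfIsCompl p c h).symm.trans (φ.prodCongr ξ)).trans
    (Submodule.prodEquivOfIsCompl p' c' h'), ?_, ?_⟩ <;> intro x <;>
    simp [LinearEquiv.trans_apply, Submodule.prodEquivOfIsCompl_symm_apply_left,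
      Submodule.prodEquivOfIsCompl_symm_apply_right, Submodule.coe_prodEquivOfIsCompl',
      LinearEquiv.prodCongr_apply]

lemma map_eq_of_eqOn {p : Submodule K V} {e e' : V ≃ₗ[K] W}
    (h : ∀ x ∈ p, e x = e' x) : p.map e.toLinearMap = p.map e'.toLinearMap := by
  ext y
  simp only [Submodule.mem_map, LinearEquiv.coe_coe]
  constructor
  · rintro ⟨x, hx, rfl⟩; exact ⟨x, hx, (h x hx).symm⟩
  · rintro ⟨x, hx, rfl⟩; exact ⟨x, hx, h x hx⟩

lemma map_eq_self_of_fixed {q p : Submodule K W} {u : W ≃ₗ[K] W}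
    (hu : ∀ x ∈ q, u x = x) (hpq : p ≤ q) : p.map u.toLinearMap = p := by
  ext y
  simp only [Submodule.mem_map, LinearEquiv.coe_coe]
  constructor
  · rintro ⟨x, hx, rfl⟩; rw [hu x (hpq hx)]; exact hx
  · intro hy; exact ⟨y, hy, hu y (hpq hy)⟩

lemma exists_compl_within {s k : Submodule K V} (h : s ≤ k) :
    ∃ c : Submodule K V, c ≤ k ∧ c ⊓ s = ⊥ ∧ c ⊔ s = k := by
  obtain ⟨c', hc'⟩ := Submodule.exists_isCompl (s.comap k.subtype)
  have hmap : (s.comap k.subtype).map k.subtype = s := by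
    rw [Submodule.map_comap_subtype, inf_eq_right.mpr h]
  refine ⟨c'.map k.subtype, Submodule.map_subtype_le _ _, ?_, ?_⟩
  · rw [← hmap, ← Submodule.map_inf _ (Submodule.injective_subtype k),
      inf_comm, hc'.inf_eq_bot, Submodule.map_bot]
  · rw [← hmap, ← Submodule.map_sup, sup_comm, hc'.sup_eq_top, Submodule.map_top,
      Submodule.range_subtype]

end Helpers

open Submodule Module LinearMap

section Helpers2
variable {K : Type*} [Field K] {V : Type*} [AddCommGroup V] [Module K V]
  {W : Type*} [AddCommGroup W] [Module K W]

lemma exists_equiv_mapping [FiniteDimensional K V] [FiniteDimensional K W]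
    (hVW : finrank K V = finrank K W) (k : Submodule K V) (k' : Submodule K W)
    (hk : finrank K k = finrank K k') :
    ∃ e : V ≃ₗ[K] W, k.map e.toLinearMap = k' := by
  obtain ⟨c, hc⟩ := k.exists_isCompl
  obtain ⟨c', hc'⟩ := k'.exists_isCompl
  obtain ⟨φ⟩ := FiniteDimensional.nonempty_linearEquiv_of_finrank_eq hk
  obtain ⟨ξ⟩ : Nonempty (c ≃ₗ[K] c') := by
    refine FiniteDimensional.nonempty_linearEquiv_of_finrank_eq ?_
    have h1 := Submodule.finrank_add_eq_of_isCompl hc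
    have h2 := Submodule.finrank_add_eq_of_isCompl hc'
    omega
  obtain ⟨e, he1, _⟩ := glue_exists k c k' c' hc hc' φ ξ
  refine ⟨e, le_antisymm ?_ ?_⟩
  · rintro _ ⟨x, hx, rfl⟩
    have h : e x = ↑(φ ⟨x, hx⟩) := he1 ⟨x, hx⟩
    simp only [LinearEquiv.coe_coe, h]
    exact (φ ⟨x, hx⟩).2
  · intro y hy
    refine ⟨(φ.symm ⟨y, hy⟩ : k), Submodule.coe_mem _, ?_⟩
    rw [LinearEquiv.coe_coe, he1 (φ.symm ⟨y, hy⟩)]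
    simp

lemma exists_fixing_auto [FiniteDimensional K W] (q k k' : Submodule K W)
    (hdim : finrank K k = finrank K k') (hq : k ⊓ q = k' ⊓ q) :
    ∃ u : W ≃ₗ[K] W, (∀ x ∈ q, u x = x) ∧ k.map u.toLinearMap = k' := by
  obtain ⟨c, hckle, hcs, hcsup⟩ := exists_compl_within (inf_le_left : k ⊓ q ≤ k)
  obtain ⟨c', hckle', hcs', hcsup'⟩ := exists_compl_within (inf_le_left : k' ⊓ q ≤ k')
  rw [hq] at hcs hcsup
  set s := k' ⊓ q with hs
  -- q ⊓ c = ⊥ and q ⊓ c' = ⊥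
  have hqc : q ⊓ c = ⊥ := by
    rw [inf_comm]
    calc c ⊓ q = (c ⊓ k) ⊓ q := by rw [inf_eq_left.mpr hckle]
    _ = c ⊓ (k ⊓ q) := inf_assoc c k q
    _ = c ⊓ s := by rw [hq]
    _ = ⊥ := hcs
  have hqc' : q ⊓ c' = ⊥ := by
    rw [inf_comm]
    calc c' ⊓ q = (c' ⊓ k') ⊓ q := by rw [inf_eq_left.mpr hckle']
    _ = c' ⊓ (k' ⊓ q) := inf_assoc c' k' q
    _ = c' ⊓ s := by rw [← hs]
    _ = ⊥ := hcs'
  obtain ⟨r, hr⟩ := (q ⊔ c).exists_isCompl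
  obtain ⟨r', hr'⟩ := (q ⊔ c').exists_isCompl
  -- IsCompl q (c ⊔ r)
  have key : ∀ (c0 r0 : Submodule K W), q ⊓ c0 = ⊥ → IsCompl (q ⊔ c0) r0 →
      IsCompl q (c0 ⊔ r0) := by
    intro c0 r0 hqc0 hr0
    constructor
    · rw [disjoint_iff, eq_bot_iff]
      rintro x hx
      obtain ⟨hxq, hxcr⟩ := Submodule.mem_inf.mp hx
      obtain ⟨y, hy, z, hz, rfl⟩ := Submodule.mem_sup.mp hxcr
      have hzq : z ∈ q ⊔ c0 := by
        have hzz : z = (y + z) - y := by abel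
        rw [hzz]
        exact sub_mem (Submodule.mem_sup_left hxq) (Submodule.mem_sup_right hy)
      have hz0 : z = 0 := by
        have hd := hr0.disjoint
        rw [disjoint_iff] at hd
        have hzmem : z ∈ (q ⊔ c0) ⊓ r0 := Submodule.mem_inf.mpr ⟨hzq, hz⟩
        rw [hd] at hzmem
        exact (Submodule.mem_bot K).mp hzmem
      rw [hz0, add_zero] at hxq ⊢
      have : y ∈ q ⊓ c0 := Submodule.mem_inf.mpr ⟨hxq, hy⟩
      rw [hqc0] at this
      exact this
    · rw [codisjoint_iff, ← sup_assoc, hr0.sup_eq_top]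
  have hcompl : IsCompl q (c ⊔ r) := key c r hqc hr
  have hcompl' : IsCompl q (c' ⊔ r') := key c' r' hqc' hr'
  -- dimensions
  have hdc : finrank K c = finrank K c' := by
    have h1 := Submodule.finrank_sup_add_finrank_inf_eq c s
    have h2 := Submodule.finrank_sup_add_finrank_inf_eq c' s
    rw [hcs, hcsup] at h1
    rw [hcs', hcsup'] at h2
    simp only [finrank_bot] at h1 h2
    omega
  have hdcr : finrank K ↥(c ⊔ r) = finrank K ↥(c' ⊔ r') := by
    have h1 := Submodule.finrank_add_eq_of_isCompl hcompl
    have h2 := Submodule.finrank_add_eq_of_isCompl hcompl'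
    omega
  -- ξ mapping c to c' inside c ⊔ r
  have hfc : finrank K (c.comap (c ⊔ r).subtype) = finrank K c := by
    rw [← Submodule.finrank_map_subtype_eq (c ⊔ r) (c.comap (c ⊔ r).subtype),
      Submodule.map_comap_subtype, inf_eq_right.mpr (le_sup_left : c ≤ c ⊔ r)]
  have hfc' : finrank K (c'.comap (c' ⊔ r').subtype) = finrank K c' := by
    rw [← Submodule.finrank_map_subtype_eq (c' ⊔ r') (c'.comap (c' ⊔ r').subtype),
      Submodule.map_comap_subtype, inf_eq_right.mpr (le_sup_left : c' ≤ c' ⊔ r')]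
  obtain ⟨ξ, hξ⟩ := exists_equiv_mapping hdcr (c.comap (c ⊔ r).subtype)
    (c'.comap (c' ⊔ r').subtype) (by rw [hfc, hfc', hdc])
  obtain ⟨u, hu1, hu2⟩ := glue_exists q (c ⊔ r) q (c' ⊔ r') hcompl hcompl'
    (LinearEquiv.refl K q) ξ
  have hufix : ∀ x ∈ q, u x = x := fun x hx => hu1 ⟨x, hx⟩
  refine ⟨u, hufix, ?_⟩
  -- map u k = k'
  have hmapc : c.map u.toLinearMap = c' := by
    apply Submodule.eq_of_le_of_finrank_eq
    · rintro _ ⟨x, hx, rfl⟩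
      have hx2 : x ∈ c ⊔ r := Submodule.mem_sup_left hx
      rw [show u.toLinearMap x = u (⟨x, hx2⟩ : ↥(c ⊔ r)) from rfl, hu2 ⟨x, hx2⟩]
      have : ξ ⟨x, hx2⟩ ∈ c'.comap (c' ⊔ r').subtype := by
        rw [← hξ]
        exact Submodule.mem_map_of_mem (by exact hx)
      exact this
    · rw [LinearEquiv.finrank_map_eq, hdc]
  have hmaps : s.map u.toLinearMap = s :=
    map_eq_self_of_fixed hufix inf_le_right
  rw [← hcsup', ← hcsup, Submodule.map_sup, hmapc, hmaps]

end Helpers2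

open Submodule Module LinearMap

section Helpers3
variable {K : Type*} [Field K] {V : Type*} [AddCommGroup V] [Module K V]
  {W : Type*} [AddCommGroup W] [Module K W]

/-- Multi-step adjustment: modify `e₀` off a committed subspace `P` so that a flag
`k` over indices `[a,b]` is carried onto the flag `k'`. -/
lemma multistep [FiniteDimensional K V] [FiniteDimensional K W] (m : ℕ) :
    ∀ (a b : ℕ), b + 1 - a = m →
    ∀ (k : ℕ → Submodule K V) (k' : ℕ → Submodule K W),
    (∀ t s, a ≤ t → t ≤ s → s ≤ b → k t ≤ k s) →
    (∀ t s, a ≤ t → t ≤ s → s ≤ b → k' t ≤ k' s) →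
    (∀ t, a ≤ t → t ≤ b → finrank K (k t) = finrank K (k' t)) →
    ∀ (P : Submodule K V) (e₀ : V ≃ₗ[K] W),
    (∀ t, a ≤ t → t ≤ b → (P ⊓ k t).map e₀.toLinearMap = P.map e₀.toLinearMap ⊓ k' t) →
    ∃ e : V ≃ₗ[K] W, (∀ x ∈ P, e x = e₀ x) ∧
      (∀ t, a ≤ t → t ≤ b → (k t).map e.toLinearMap = k' t) := by
  induction m with
  | zero =>
    intro a b hab k k' _ _ _ P e₀ _
    exact ⟨e₀, fun x _ => rfl, fun t hat htb => absurd hab (by omega)⟩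
  | succ m ih =>
    intro a b hab k k' hmono hmono' hdims P e₀ hcond
    have hab' : a ≤ b := by omega
    obtain ⟨u, hu1, hu2⟩ := exists_fixing_auto (P.map e₀.toLinearMap)
      ((k a).map e₀.toLinearMap) (k' a)
      (by rw [LinearEquiv.finrank_map_eq]; exact hdims a le_rfl hab')
      (by rw [← Submodule.map_inf e₀.toLinearMap e₀.injective, inf_comm (k a) P,
        hcond a le_rfl hab', inf_comm])
    set e₁ := e₀.trans u with he₁
    have he₁c : e₁.toLinearMap = u.toLinearMap.comp e₀.toLinearMap := rfl
    have hmap₁ : ∀ p : Submodule K V, p.map e₁.toLinearMap =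
        (p.map e₀.toLinearMap).map u.toLinearMap := by
      intro p; rw [he₁c, Submodule.map_comp]
    set q := P.map e₀.toLinearMap with hqdef
    have hcompat : ∀ t, a + 1 ≤ t → t ≤ b →
        ((P ⊔ k a) ⊓ k t).map e₁.toLinearMap = (P ⊔ k a).map e₁.toLinearMap ⊓ k' t := by
      intro t hat htb
      have hkat : k a ≤ k t := hmono a t le_rfl (by omega) htb
      have hkat' : k' a ≤ k' t := hmono' a t le_rfl (by omega) htb
      have hfix : ∀ p : Submodule K W, p ≤ q → p.map u.toLinearMap = p :=
        fun p hp => map_eq_self_of_fixed hu1 hp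
      have lhs : ((P ⊔ k a) ⊓ k t).map e₁.toLinearMap = k' a ⊔ (q ⊓ k' t) := by
        rw [sup_comm P (k a), sup_inf_assoc_of_le P hkat, hmap₁, Submodule.map_sup,
          Submodule.map_sup, hu2, hcond t (by omega) htb,
          hfix _ (inf_le_left : q ⊓ k' t ≤ q)]
      have rhs : (P ⊔ k a).map e₁.toLinearMap ⊓ k' t = k' a ⊔ (q ⊓ k' t) := by
        rw [hmap₁, Submodule.map_sup, Submodule.map_sup, hu2, hfix q le_rfl,
          sup_comm q (k' a), sup_inf_assoc_of_le _ hkat']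
      rw [lhs, rhs]
    obtain ⟨e, he1, he2⟩ := ih (a + 1) b (by omega) k k'
      (fun t s h1 h2 h3 => hmono t s (by omega) h2 h3)
      (fun t s h1 h2 h3 => hmono' t s (by omega) h2 h3)
      (fun t h1 h2 => hdims t (by omega) h2)
      (P ⊔ k a) e₁ hcompat
    refine ⟨e, ?_, ?_⟩
    · intro x hx
      rw [he1 x (Submodule.mem_sup_left hx)]
      show u (e₀ x) = e₀ x
      exact hu1 (e₀ x) (Submodule.mem_map_of_mem hx)
    · intro t hat htb
      rcases eq_or_lt_of_le hat with rfl | hlt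
      · have h3 : (k a).map e.toLinearMap = (k a).map e₁.toLinearMap :=
          map_eq_of_eqOn (fun x hx => he1 x (Submodule.mem_sup_right hx))
        rw [h3, hmap₁, hu2]
      · exact he2 t (by omega) htb

/-- Existence of an isomorphism intertwining two maps with equal kernels. -/
lemma exists_forced {U : Type*} [AddCommGroup U] [Module K U]
    [FiniteDimensional K V] [FiniteDimensional K W]
    (a : U →ₗ[K] V) (b : U →ₗ[K] W) (hk : ker a = ker b)
    (hd : finrank K V = finrank K W) : ∃ e : V ≃ₗ[K] W, ∀ x, e (a x) = b x := by
  let φ : LinearMap.range a ≃ₗ[K] LinearMap.range b :=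
    ((a.quotKerEquivRange).symm.trans (Submodule.quotEquivOfEq _ _ hk)).trans
      b.quotKerEquivRange
  have hφ : ∀ x : U, φ ⟨a x, LinearMap.mem_range_self a x⟩ =
      ⟨b x, LinearMap.mem_range_self b x⟩ := by
    intro x
    have h1 : (⟨a x, LinearMap.mem_range_self a x⟩ : LinearMap.range a) =
        a.quotKerEquivRange (Submodule.Quotient.mk x) :=
      Subtype.ext (by rw [LinearMap.quotKerEquivRange_apply_mk])
    rw [h1]
    apply Subtype.ext
    simp only [φ, LinearEquiv.trans_apply, LinearEquiv.symm_apply_apply,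
      Submodule.quotEquivOfEq_mk, LinearMap.quotKerEquivRange_apply_mk]
  obtain ⟨c, hc⟩ := (LinearMap.range a).exists_isCompl
  obtain ⟨c', hc'⟩ := (LinearMap.range b).exists_isCompl
  obtain ⟨ξ⟩ : Nonempty (c ≃ₗ[K] c') := by
    refine FiniteDimensional.nonempty_linearEquiv_of_finrank_eq ?_
    have h1 := Submodule.finrank_add_eq_of_isCompl hc
    have h2 := Submodule.finrank_add_eq_of_isCompl hc'
    have h3 : finrank K (LinearMap.range a) = finrank K (LinearMap.range b) :=
      φ.finrank_eq
    omega
  obtain ⟨e, he1, _⟩ := glue_exists _ c _ c' hc hc' φ ξ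
  refine ⟨e, fun x => ?_⟩
  have h := he1 ⟨a x, LinearMap.mem_range_self a x⟩
  rw [hφ x] at h
  exact h

end Helpers3



/-- Uniqueness up to isomorphism of the rank-maximizing (rigid) representation of the
equioriented type `Aₙ` quiver: two chains of linear maps `(V, f)` and `(W, f')` of the same
dimension vector, all of whose composite ranks attain `min {dim V_i, …, dim V_j}`, are
isomorphic as representations. Composites are encoded by families `g, g'` satisfying
`g i i = id` and `g i (j+1) = f j ∘ g i j`. -/
theorem chain_rank_max_unique_up_to_iso (K : Type*) [Field K] (n : ℕ)
    (V W : ℕ → Type*) [∀ i, AddCommGroup (V i)] [∀ i, Module K (V i)]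
    [∀ i, FiniteDimensional K (V i)]
    [∀ i, AddCommGroup (W i)] [∀ i, Module K (W i)] [∀ i, FiniteDimensional K (W i)]
    (f : ∀ i, V i →ₗ[K] V (i + 1)) (f' : ∀ i, W i →ₗ[K] W (i + 1))
    (g : ∀ i j, V i →ₗ[K] V j) (g' : ∀ i j, W i →ₗ[K] W j)
    (hgi : ∀ i, g i i = LinearMap.id)
    (hgs : ∀ i j, i ≤ j → g i (j + 1) = (f j).comp (g i j))
    (hgi' : ∀ i, g' i i = LinearMap.id)
    (hgs' : ∀ i j, i ≤ j → g' i (j + 1) = (f' j).comp (g' i j))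
    (hdim : ∀ i, Module.finrank K (V i) = Module.finrank K (W i))
    (hV : ∀ i j (_ : 1 ≤ i) (hij : i ≤ j) (_ : j ≤ n),
      Module.finrank K (LinearMap.range (g i j)) =
        (Finset.Icc i j).inf' (Finset.nonempty_Icc.mpr hij)
          (fun k => Module.finrank K (V k)))
    (hW : ∀ i j (_ : 1 ≤ i) (hij : i ≤ j) (_ : j ≤ n),
      Module.finrank K (LinearMap.range (g' i j)) =
        (Finset.Icc i j).inf' (Finset.nonempty_Icc.mpr hij)
          (fun k => Module.finrank K (W k))) :
    ∃ e : ∀ i, V i ≃ₗ[K] W i,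
      ∀ i, 1 ≤ i → i + 1 ≤ n →
        (e (i + 1)).toLinearMap.comp (f i) = (f' i).comp (e i).toLinearMap := by
  classical
  -- composite identities
  have kcomp : ∀ i j, i + 1 ≤ j → (g (i + 1) j).comp (f i) = g i j := by
    intro i j hij
    induction j, hij using Nat.le_induction with
    | base =>
      rw [hgi, hgs i i le_rfl, hgi, LinearMap.id_comp, LinearMap.comp_id]
    | succ j hj ihj =>
      rw [hgs (i + 1) j hj, hgs i j (by omega), LinearMap.comp_assoc, ihj]
  have kcomp' : ∀ i j, i + 1 ≤ j → (g' (i + 1) j).comp (f' i) = g' i j := by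
    intro i j hij
    induction j, hij using Nat.le_induction with
    | base =>
      rw [hgi', hgs' i i le_rfl, hgi', LinearMap.id_comp, LinearMap.comp_id]
    | succ j hj ihj =>
      rw [hgs' (i + 1) j hj, hgs' i j (by omega), LinearMap.comp_assoc, ihj]
  -- kernels are increasing
  have kmono : ∀ i t s, i ≤ t → t ≤ s → ker (g i t) ≤ ker (g i s) := by
    intro i t s hit hts
    induction s, hts using Nat.le_induction with
    | base => exact le_rfl
    | succ s hs ihs =>
      rw [hgs i s (le_trans hit hs)]
      exact le_trans ihs (LinearMap.ker_le_ker_comp _ _)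
  have kmono' : ∀ i t s, i ≤ t → t ≤ s → ker (g' i t) ≤ ker (g' i s) := by
    intro i t s hit hts
    induction s, hts using Nat.le_induction with
    | base => exact le_rfl
    | succ s hs ihs =>
      rw [hgs' i s (le_trans hit hs)]
      exact le_trans ihs (LinearMap.ker_le_ker_comp _ _)
  -- equal ranks, hence equal kernel dimensions
  have hrk : ∀ i j, 1 ≤ i → i ≤ j → j ≤ n →
      finrank K (LinearMap.range (g i j)) = finrank K (LinearMap.range (g' i j)) := by
    intro i j h1 h2 h3
    rw [hV i j h1 h2 h3, hW i j h1 h2 h3]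
    exact Finset.inf'_congr _ rfl (fun x _ => hdim x)
  have hkerdim : ∀ i j, 1 ≤ i → i ≤ j → j ≤ n →
      finrank K (ker (g i j)) = finrank K (ker (g' i j)) := by
    intro i j h1 h2 h3
    have e1 := LinearMap.finrank_range_add_finrank_ker (g i j)
    have e2 := LinearMap.finrank_range_add_finrank_ker (g' i j)
    have e3 := hdim i
    have e4 := hrk i j h1 h2 h3
    omega
  -- intersection of image and kernel
  have hint : ∀ i j, i + 1 ≤ j →
      LinearMap.range (f i) ⊓ ker (g (i + 1) j) = (ker (g i j)).map (f i) := by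
    intro i j hij
    ext y
    simp only [Submodule.mem_inf, LinearMap.mem_ker, LinearMap.mem_range, Submodule.mem_map]
    constructor
    · rintro ⟨⟨x, rfl⟩, hy⟩
      refine ⟨x, ?_, rfl⟩
      have hc := LinearMap.congr_fun (kcomp i j hij) x
      simp only [LinearMap.comp_apply] at hc
      rw [← hc]
      exact hy
    · rintro ⟨x, hx, rfl⟩
      refine ⟨⟨x, rfl⟩, ?_⟩
      have hc := LinearMap.congr_fun (kcomp i j hij) x
      simp only [LinearMap.comp_apply] at hc
      rw [hc]
      exact hx
  have hint' : ∀ i j, i + 1 ≤ j →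
      LinearMap.range (f' i) ⊓ ker (g' (i + 1) j) = (ker (g' i j)).map (f' i) := by
    intro i j hij
    ext y
    simp only [Submodule.mem_inf, LinearMap.mem_ker, LinearMap.mem_range, Submodule.mem_map]
    constructor
    · rintro ⟨⟨x, rfl⟩, hy⟩
      refine ⟨x, ?_, rfl⟩
      have hc := LinearMap.congr_fun (kcomp' i j hij) x
      simp only [LinearMap.comp_apply] at hc
      rw [← hc]
      exact hy
    · rintro ⟨x, hx, rfl⟩
      refine ⟨⟨x, rfl⟩, ?_⟩
      have hc := LinearMap.congr_fun (kcomp' i j hij) x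
      simp only [LinearMap.comp_apply] at hc
      rw [hc]
      exact hx
  -- the invariant carried along the induction
  let Q : ∀ i, (V i ≃ₗ[K] W i) → Prop := fun i e =>
    1 ≤ i → ∀ j, i ≤ j → j ≤ n →
      (ker (g i j)).map e.toLinearMap = ker (g' i j)
  -- the inductive step
  have hstep : ∀ i (e : V i ≃ₗ[K] W i), Q i e →
      ∃ e' : V (i + 1) ≃ₗ[K] W (i + 1), Q (i + 1) e' ∧
        (1 ≤ i → i + 1 ≤ n → ∀ x, e' (f i x) = f' i (e x)) := by
    intro i e hQ
    by_cases h0 : 1 ≤ i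
    · by_cases h1 : i + 1 ≤ n
      · -- main construction
        have hker1 : ker (g i (i + 1)) = ker (f i) := by
          rw [hgs i i le_rfl, hgi, LinearMap.comp_id]
        have hker1' : ker (g' i (i + 1)) = ker (f' i) := by
          rw [hgs' i i le_rfl, hgi', LinearMap.comp_id]
        have hmapker : (ker (f i)).map e.toLinearMap = ker (f' i) := by
          rw [← hker1, ← hker1']
          exact hQ h0 (i + 1) (by omega) h1
        have hkeq : ker (f i) = ker ((f' i).comp e.toLinearMap) := by
          rw [LinearMap.ker_comp, ← hmapker]
          exact (Submodule.comap_map_eq_of_injective e.injective _).symm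
        obtain ⟨e₀, he₀⟩ := exists_forced (f i) ((f' i).comp e.toLinearMap) hkeq
          (hdim (i + 1))
        have he₀' : ∀ x, e₀ (f i x) = f' i (e x) := by
          intro x
          have := he₀ x
          simpa using this
        have hcomp0 : e₀.toLinearMap.comp (f i) = (f' i).comp e.toLinearMap :=
          LinearMap.ext (fun x => by simpa using he₀' x)
        have hPmap : (LinearMap.range (f i)).map e₀.toLinearMap = LinearMap.range (f' i) := by
          rw [← LinearMap.range_comp, hcomp0, LinearMap.range_comp,
            LinearEquiv.range, Submodule.map_top]
        have hcond : ∀ j, i + 1 ≤ j → j ≤ n →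
            ((LinearMap.range (f i)) ⊓ ker (g (i + 1) j)).map e₀.toLinearMap =
              (LinearMap.range (f i)).map e₀.toLinearMap ⊓ ker (g' (i + 1) j) := by
          intro j hj1 hj2
          rw [hint i j hj1, hPmap, hint' i j hj1, ← Submodule.map_comp, hcomp0,
            Submodule.map_comp]
          congr 1
          exact hQ h0 j (by omega) hj2
        obtain ⟨e', he'1, he'2⟩ := multistep (n + 1 - (i + 1)) (i + 1) n rfl
          (fun j => ker (g (i + 1) j)) (fun j => ker (g' (i + 1) j))
          (fun t s ht hts _ => kmono (i + 1) t s ht hts)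
          (fun t s ht hts _ => kmono' (i + 1) t s ht hts)
          (fun j hj1 hj2 => hkerdim (i + 1) j (by omega) hj1 hj2)
          (LinearMap.range (f i)) e₀ hcond
        refine ⟨e', fun _ j hj1 hj2 => he'2 j hj1 hj2, fun _ _ x => ?_⟩
        rw [he'1 (f i x) (LinearMap.mem_range_self _ x)]
        exact he₀' x
      · -- i + 1 > n : choose an arbitrary isomorphism
        obtain ⟨e'⟩ := FiniteDimensional.nonempty_linearEquiv_of_finrank_eq (hdim (i + 1))
        exact ⟨e', fun _ j hj1 hj2 => absurd (le_trans hj1 hj2) h1,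
          fun _ h => absurd h h1⟩
    · -- i = 0 : build e₁ from scratch
      have hi0 : i = 0 := by omega
      subst hi0
      obtain ⟨e₀⟩ := FiniteDimensional.nonempty_linearEquiv_of_finrank_eq (hdim 1)
      obtain ⟨e', he'1, he'2⟩ := multistep (n + 1 - 1) 1 n rfl
        (fun j => ker (g 1 j)) (fun j => ker (g' 1 j))
        (fun t s ht hts _ => kmono 1 t s ht hts)
        (fun t s ht hts _ => kmono' 1 t s ht hts)
        (fun j hj1 hj2 => hkerdim 1 j le_rfl hj1 hj2)
        ⊥ e₀ (by intro j _ _; simp)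
      exact ⟨e', fun _ j hj1 hj2 => he'2 j hj1 hj2, fun h => absurd h (by omega)⟩
  choose se hse1 hse2 using hstep
  obtain ⟨ez⟩ := FiniteDimensional.nonempty_linearEquiv_of_finrank_eq (hdim 0)
  have hQz : Q 0 ez := fun h => absurd h (by omega)
  let E : ∀ i, {e : V i ≃ₗ[K] W i // Q i e} :=
    fun i => Nat.rec ⟨ez, hQz⟩ (fun i p => ⟨se i p.1 p.2, hse1 i p.1 p.2⟩) i
  refine ⟨fun i => (E i).1, fun i h1 h2 => ?_⟩
  apply LinearMap.ext
  intro x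
  simp only [LinearMap.comp_apply, LinearEquiv.coe_coe]
  exact hse2 i (E i).1 (E i).2 h1 h2 x
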